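/- Assume the pay-off function μ is convex and let x ∈ St(μ) with x ≠ ⊤. Then: (1) for every z ∈ 𝓛 with ⊥ < z ≤ x, one does not have μ_A(⊥,x) < μ_A(⊥,z) (i.e. the restriction of the Harder-Narasimhan game to the interval [⊥,x] is semi-stable); (2) for every y ∈ 𝓛 with x < y, one does not have μ_A(⊥,x) ≤ μ_A(x,y). -/

import Mathlib

variable {L : Type*} {S : Type*}

/-- `μ_max(a,y) := sup { μ(a,b) | b ∈ 𝓛, a < b ≤ y }`. -/
def muMax [Preorder L] [CompleteLattice S] (μ : L → L → S) (a y : L) : S :=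
  ⨆ b ∈ {b : L | a < b ∧ b ≤ y}, μ a b

/-- `μ_A(x,y) := inf { μ_max(a,y) | a ∈ 𝓛, x ≤ a < y }`. -/
def muA [Preorder L] [CompleteLattice S] (μ : L → L → S) (x y : L) : S :=
  ⨅ a ∈ {a : L | x ≤ a ∧ a < y}, muMax μ a y

/-- The pay-off function `μ` is convex if `μ(x ⊓ y, x) ≤ μ(y, x ⊔ y)` whenever `x ≰ y`. -/
def ConvexPayoff [Lattice L] [CompleteLattice S] (μ : L → L → S) : Prop :=
  ∀ x y : L, ¬ x ≤ y → μ (x ⊓ y) x ≤ μ y (x ⊔ y)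


/-- `St(μ)`: the set of `x ∈ 𝓛 \ {⊥}` satisfying conditions (S1) and (S2). -/
def St [Preorder L] [OrderBot L] [CompleteLattice S] (μ : L → L → S) : Set L :=
  {x : L | x ≠ ⊥ ∧ (∀ y : L, y ≠ ⊥ → ¬ muA μ ⊥ x < muA μ ⊥ y) ∧
    (∀ y : L, y ≠ ⊥ → muA μ ⊥ y = muA μ ⊥ x → y ≤ x)}

theorem stmt5 [Lattice L] [BoundedOrder L] [CompleteLattice S]
    (hbt : (⊥ : L) ≠ ⊤) (μ : L → L → S) (hconv : ConvexPayoff μ)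
    (x : L) (hx : x ∈ St μ) (hxtop : x ≠ ⊤) :
    -- (1): the restriction of the game to [⊥, x] is semi-stable
    (∀ z : L, ⊥ < z → z ≤ x → ¬ muA μ ⊥ x < muA μ ⊥ z) ∧
    -- (2)
    (∀ y : L, x < y → ¬ muA μ ⊥ x ≤ muA μ x y) := by
  obtain ⟨hxbot, hS1, hS2⟩ := hx
  constructor
  · intro z hz _
    exact hS1 z hz.ne'
  · intro y hxy hle
    have hybot : y ≠ ⊥ := fun h => hxbot (le_bot_iff.mp (h ▸ hxy.le))
    have key : muA μ ⊥ x ≤ muA μ ⊥ y := by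
      rw [muA]
      refine le_iInf₂ fun a ha => ?_
      obtain ⟨-, hay⟩ := ha
      by_cases hxa : x ≤ a
      · calc muA μ ⊥ x ≤ muA μ x y := hle
          _ ≤ muMax μ a y := iInf₂_le a ⟨hxa, hay⟩
      · have h1 : muA μ ⊥ x ≤ muMax μ (x ⊓ a) x :=
          iInf₂_le (x ⊓ a) ⟨bot_le, inf_lt_left.mpr hxa⟩
        have h2 : muMax μ (x ⊓ a) x ≤ muMax μ a y := by
          rw [muMax]
          refine iSup₂_le fun b hb => ?_
          obtain ⟨hb1, hb2⟩ := hb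
          have hba : ¬ b ≤ a := fun h => hb1.not_ge (le_inf hb2 h)
          have hinf : b ⊓ a = x ⊓ a :=
            le_antisymm (inf_le_inf_right a hb2) (le_inf hb1.le inf_le_right)
          have hc := hconv b a hba
          rw [hinf] at hc
          refine le_trans hc ?_
          have hmem : b ⊔ a ∈ {c : L | a < c ∧ c ≤ y} :=
            ⟨right_lt_sup.mpr hba, sup_le (hb2.trans hxy.le) hay.le⟩
          exact le_iSup₂ (f := fun c (_ : c ∈ {c : L | a < c ∧ c ≤ y}) => μ a c) (b ⊔ a) hmem
        exact h1.trans h2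
    have hyx : muA μ ⊥ y ≤ muA μ ⊥ x := by
      by_contra h
      exact hS1 y hybot (lt_of_le_not_ge key h)
    exact hxy.not_ge (hS2 y hybot (le_antisymm hyx key))
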